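/- Let A ∈ ℂ^{N×N} be positive semidefinite and let v = (v_0,…,v_{N−1})^T ∈ ℂ^N. Then det(A ⋄ v v*) = |v_0|^{2N} · det A, where ⋄ denotes the Jury product. -/

import Mathlib

open Finset Matrix ComplexOrder

/-- The Jury product of two `N × N` complex matrices (indices `0, …, N-1`):
`(A ⋄ B)_{jk} = ∑_{m=0}^{j} ∑_{n=0}^{k} a_{m,n} b_{j-m,k-n}`. -/
noncomputable def jury {N : ℕ} (A B : Matrix (Fin N) (Fin N) ℂ) :
    Matrix (Fin N) (Fin N) ℂ :=
  Matrix.of fun j k => ∑ m ∈ Finset.Iic j, ∑ n ∈ Finset.Iic k, A m n * B (j - m) (k - n)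

/-- Lower-triangular Toeplitz matrix built from `v`. -/
noncomputable def toep {N : ℕ} (v : Fin N → ℂ) : Matrix (Fin N) (Fin N) ℂ :=
  Matrix.of fun j m => if m ≤ j then v (j - m) else 0

lemma sum_Iic_eq {N : ℕ} (f : Fin N → ℂ) (j : Fin N) :
    ∑ m ∈ Finset.Iic j, f m = ∑ m : Fin N, if m ≤ j then f m else 0 := by
  rw [← Finset.sum_filter]
  congr 1
  ext m
  simp

lemma jury_factor {N : ℕ} (A : Matrix (Fin N) (Fin N) ℂ) (v : Fin N → ℂ) :
    jury A (Matrix.vecMulVec v (star v)) = toep v * A * (toep v)ᴴ := by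
  ext j k
  simp only [jury, Matrix.of_apply, Matrix.mul_apply, Matrix.conjTranspose_apply,
    Matrix.vecMulVec_apply, Pi.star_apply, Finset.sum_mul]
  rw [Finset.sum_comm (γ := Fin N)]
  rw [sum_Iic_eq]
  refine Finset.sum_congr rfl fun m _ => ?_
  by_cases hm : m ≤ k
  · simp only [if_pos hm]
    rw [sum_Iic_eq]
    refine Finset.sum_congr rfl fun n _ => ?_
    by_cases hn : n ≤ j
    · simp only [if_pos hn, toep, Matrix.of_apply, if_pos hm]
      ring
    · simp [hn, toep]
  · simp [hm, toep]

lemma toep_det {N : ℕ} [NeZero N] (v : Fin N → ℂ) : (toep v).det = v 0 ^ N := by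
  rw [← Matrix.det_transpose]
  rw [Matrix.det_of_upperTriangular]
  · simp [toep, sub_self, Finset.prod_const, Finset.card_univ]
  · intro i j hij
    simp only [id] at hij
    simp only [toep, Matrix.transpose_apply, Matrix.of_apply]
    exact if_neg (not_le.mpr hij)

theorem jury_det_rank_one {N : ℕ} [NeZero N] (A : Matrix (Fin N) (Fin N) ℂ)
    (hA : A.PosSemidef) (v : Fin N → ℂ) :
    (jury A (Matrix.vecMulVec v (star v))).det
      = ((‖v 0‖ : ℝ) : ℂ) ^ (2 * N) * A.det := by
  rw [jury_factor, Matrix.det_mul, Matrix.det_mul, Matrix.det_conjTranspose, toep_det]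
  have h : ((‖v 0‖ : ℝ) : ℂ) ^ (2 * N) = v 0 ^ N * star (v 0 ^ N) := by
    rw [star_pow, ← mul_pow, pow_mul]
    congr 1
    rw [show (star (v 0)) = (starRingEnd ℂ) (v 0) from rfl, Complex.mul_conj,
      Complex.normSq_eq_norm_sq]
    push_cast
    ring
  rw [h]
  ring
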